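/- Let G be a finite group, α a finite index set, and (G_a)_{a∈α} a family of subgroups of G. The pushforward of the uniform PMF on G under the map g ↦ (gG_a)_{a∈α} is the uniform distribution on its support, i.e., on the image set {(gG_a)_{a∈α} : g ∈ G} ⊆ ∏_{a∈α} G⧸G_a (quasi-uniformity of group characterizable random variables). -/

import Mathlib

open scoped ENNReal

/-- Quasi-uniformity of group characterizable random variables: the pushforward of the
uniform PMF on a finite group `G` under `g ↦ (g G_a)_{a ∈ α}` is the uniform distribution
on its support, the image set `{(g G_a)_a : g ∈ G}`. -/
theorem pmf_map_coset_tuple_quasi_uniform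
    (G : Type*) [Group G] [Fintype G] (α : Type*) [Fintype α] (Gs : α → Subgroup G) :
    (∀ x ∈ Set.range (fun g : G => fun a => (QuotientGroup.mk g : G ⧸ Gs a)),
        PMF.map (fun g : G => fun a => (QuotientGroup.mk g : G ⧸ Gs a))
          (PMF.uniformOfFintype G) x
        = ((Nat.card (Set.range
            (fun g : G => fun a => (QuotientGroup.mk g : G ⧸ Gs a))) : ℝ≥0∞))⁻¹) ∧
    (∀ x ∉ Set.range (fun g : G => fun a => (QuotientGroup.mk g : G ⧸ Gs a)),
        PMF.map (fun g : G => fun a => (QuotientGroup.mk g : G ⧸ Gs a))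
          (PMF.uniformOfFintype G) x = 0) := by
  classical
  set f : G → ∀ a, G ⧸ Gs a := fun g => fun a => (QuotientGroup.mk g : G ⧸ Gs a) with hf
  set H : Subgroup G := ⨅ a, Gs a with hH
  have key : ∀ g g' : G, f g = f g' ↔ g⁻¹ * g' ∈ H := by
    intro g g'
    simp [hf, funext_iff, hH, Subgroup.mem_iInf, QuotientGroup.eq]
  -- leftRel H = Setoid.ker f
  have hrel : QuotientGroup.leftRel H = Setoid.ker f := by
    ext g g'
    rw [QuotientGroup.leftRel_apply, Setoid.ker_def, key]
  have hcardrange : Nat.card (Set.range f) = Nat.card (G ⧸ H) := by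
    have : Quotient (Setoid.ker f) ≃ Set.range f := Setoid.quotientKerEquivRange f
    rw [Nat.card_congr this.symm]
    rw [← hrel]
    rfl
  have hcardG : Nat.card G = Nat.card (G ⧸ H) * Nat.card H :=
    Subgroup.card_eq_card_quotient_mul_card_subgroup H
  constructor
  · rintro x ⟨g₀, rfl⟩
    rw [PMF.map_apply]
    rw [tsum_fintype]
    simp only [key, PMF.uniformOfFintype_apply]
    rw [← Finset.sum_filter, Finset.sum_const]
    have hcardfil : (Finset.univ.filter (fun g : G => g₀⁻¹ * g ∈ H)).card
        = Nat.card H := by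
      rw [Nat.card_eq_fintype_card, ← Fintype.card_subtype]
      exact Fintype.card_congr ((Equiv.mulLeft g₀⁻¹).subtypeEquiv (fun b => Iff.rfl))
    rw [hcardfil, nsmul_eq_mul, ← Nat.card_eq_fintype_card, hcardG, hcardrange]
    have hq : ((Nat.card (G ⧸ H) : ℝ≥0∞)) ≠ 0 := by
      exact_mod_cast Nat.card_pos.ne'
    have hh : ((Nat.card H : ℝ≥0∞)) ≠ 0 := by
      exact_mod_cast Nat.card_pos.ne'
    rw [Nat.cast_mul, ENNReal.mul_inv (Or.inl hq) (Or.inl (ENNReal.natCast_ne_top _)),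
      mul_comm ((Nat.card (G ⧸ H) : ℝ≥0∞))⁻¹, ← mul_assoc,
      ENNReal.mul_inv_cancel hh (ENNReal.natCast_ne_top _), one_mul]
  · rintro x hx
    rw [PMF.map_apply]
    apply ENNReal.summable.tsum_eq_zero_iff |>.mpr
    intro g
    simp only [ite_eq_right_iff]
    intro h
    exact absurd ⟨g, h.symm⟩ hx
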